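/- arXiv:2012.10315 — 2 statements merged into one kernel-verified Lean document; each statement's English description precedes it below -/
import Mathlib

section
/- Let T be a compact positive self-adjoint operator on a separable Hilbert space H with eigenvalues {η_k} and orthonormal eigenfunctions {e_k}. Suppose h₀ ∈ H satisfies h₀ = T^((c-1)/2) g for some g ∈ H with ‖g‖² ≤ ζ, where c ∈ (1,2]. Define the regularized element h_ξ = (T + ξI)^{-1} T h₀ for ξ > 0. Then ‖h_ξ - h₀‖ ≤ ξ^((c-1)/2) √ζ. -/
open scoped RealInnerProductSpace

/-- Norm squared as a sum of squared coefficients. -/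
lemma normsq_tsum {H : Type*} [NormedAddCommGroup H] [InnerProductSpace ℝ H] [CompleteSpace H]
    (e : HilbertBasis ℕ ℝ H) (x : H) :
    ‖x‖ ^ 2 = ∑' k, (e.repr x k) ^ 2 := by
  have h := e.tsum_inner_mul_inner x x
  rw [real_inner_self_eq_norm_sq] at h
  rw [← h]
  congr 1
  ext k
  rw [HilbertBasis.repr_apply_apply, sq, real_inner_comm]

lemma sq_summable {H : Type*} [NormedAddCommGroup H] [InnerProductSpace ℝ H] [CompleteSpace H]
    (e : HilbertBasis ℕ ℝ H) (x : H) :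
    Summable fun k => (e.repr x k) ^ 2 := by
  have h := e.summable_inner_mul_inner x x
  refine h.congr (fun k => ?_)
  rw [HilbertBasis.repr_apply_apply, sq, real_inner_comm]

/-- Regularization bias bound under a source condition, in spectral form. -/
theorem stmt0 {H : Type*} [NormedAddCommGroup H] [InnerProductSpace ℝ H] [CompleteSpace H]
    (e : HilbertBasis ℕ ℝ H) (η : ℕ → ℝ) (hη : ∀ k, 0 ≤ η k)
    (c ζ : ℝ) (hc1 : 1 < c) (hc2 : c ≤ 2)
    (g h₀ hreg : H) (hg : ‖g‖ ^ 2 ≤ ζ)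
    (hh₀ : ∀ k, e.repr h₀ k = η k ^ ((c - 1) / 2) * e.repr g k)
    (ξ : ℝ) (hξ : 0 < ξ)
    (hhreg : ∀ k, e.repr hreg k = (η k / (η k + ξ)) * e.repr h₀ k) :
    ‖hreg - h₀‖ ≤ ξ ^ ((c - 1) / 2) * Real.sqrt ζ := by
  set s : ℝ := (c - 1) / 2 with hs
  have hs0 : 0 < s := by rw [hs]; linarith
  have hs1 : s ≤ 1 := by rw [hs]; linarith
  have hζ : 0 ≤ ζ := le_trans (by positivity) hg
  have hξs : 0 ≤ ξ ^ s := Real.rpow_nonneg hξ.le s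
  -- key coefficient inequality
  have key : ∀ k, (e.repr (hreg - h₀) k) ^ 2 ≤ (ξ ^ s) ^ 2 * (e.repr g k) ^ 2 := by
    intro k
    have hηk := hη k
    have hd : 0 < η k + ξ := by linarith
    have hrepr : e.repr (hreg - h₀) k = -(ξ / (η k + ξ)) * (η k ^ s * e.repr g k) := by
      have h1 := hhreg k
      have h2 := hh₀ k
      rw [map_sub]
      simp only [lp.coeFn_sub, Pi.sub_apply, h1, h2]
      field_simp
      ring
    -- the scalar bound : (ξ/(η+ξ)) * η^s ≤ ξ^s
    have hscal : ξ / (η k + ξ) * η k ^ s ≤ ξ ^ s := by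
      rw [div_mul_eq_mul_div, div_le_iff₀ hd]
      have hgm : η k ^ s * ξ ^ (1 - s) ≤ s * η k + (1 - s) * ξ :=
        Real.geom_mean_le_arith_mean2_weighted hs0.le (by linarith) hηk hξ.le (by ring)
      have hsplit : ξ ^ s * ξ ^ (1 - s) = ξ := by
        rw [← Real.rpow_add hξ]; norm_num
      calc ξ * η k ^ s = ξ ^ s * (η k ^ s * ξ ^ (1 - s)) := by
            rw [mul_comm (η k ^ s), ← mul_assoc, hsplit]
        _ ≤ ξ ^ s * (s * η k + (1 - s) * ξ) := by
            apply mul_le_mul_of_nonneg_left hgm hξs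
        _ ≤ ξ ^ s * (η k + ξ) := by
            apply mul_le_mul_of_nonneg_left _ hξs
            nlinarith [Real.rpow_nonneg hξ.le (1:ℝ), hξ.le]
    have habs : |e.repr (hreg - h₀) k| ≤ ξ ^ s * |e.repr g k| := by
      rw [hrepr, abs_mul, abs_neg, abs_mul]
      rw [abs_of_nonneg (by positivity : (0:ℝ) ≤ ξ / (η k + ξ)),
        abs_of_nonneg (Real.rpow_nonneg hηk s), ← mul_assoc]
      exact mul_le_mul_of_nonneg_right hscal (abs_nonneg _)
    calc (e.repr (hreg - h₀) k) ^ 2 = |e.repr (hreg - h₀) k| ^ 2 := (sq_abs _).symm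
      _ ≤ (ξ ^ s * |e.repr g k|) ^ 2 := by
          apply pow_le_pow_left₀ (abs_nonneg _) habs
      _ = (ξ ^ s) ^ 2 * (e.repr g k) ^ 2 := by rw [mul_pow, sq_abs]
  have hsum : ‖hreg - h₀‖ ^ 2 ≤ (ξ ^ s) ^ 2 * ζ := by
    rw [normsq_tsum e]
    calc ∑' k, (e.repr (hreg - h₀) k) ^ 2
        ≤ ∑' k, (ξ ^ s) ^ 2 * (e.repr g k) ^ 2 :=
          Summable.tsum_le_tsum key (sq_summable e _) ((sq_summable e g).mul_left _)
      _ = (ξ ^ s) ^ 2 * ∑' k, (e.repr g k) ^ 2 := tsum_mul_left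
      _ = (ξ ^ s) ^ 2 * ‖g‖ ^ 2 := by rw [← normsq_tsum e]
      _ ≤ (ξ ^ s) ^ 2 * ζ := by nlinarith
  calc ‖hreg - h₀‖ = Real.sqrt (‖hreg - h₀‖ ^ 2) := by
        rw [Real.sqrt_sq (norm_nonneg _)]
    _ ≤ Real.sqrt ((ξ ^ s) ^ 2 * ζ) := Real.sqrt_le_sqrt hsum
    _ = ξ ^ s * Real.sqrt ζ := by
        rw [Real.sqrt_mul (by positivity), Real.sqrt_sq hξs]
end

section
/- Let H be a Hilbert space and let (Ω, P) be a probability space with a random element φ : Ω → H satisfying ‖φ(ω)‖ ≤ κ almost surely, and a bounded random variable Y with |Y| ≤ C almost surely. Let T = E[φ ⊗ φ] and suppose h₀ ∈ H satisfies E[φ Y] = T h₀. Define h_ξ as the minimizer of E[(Y - ⟨h, φ⟩)²] + ξ‖h‖² over H for ξ > 0. Then ‖h_ξ‖ ≤ κ‖h₀‖/√ξ. -/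
open scoped RealInnerProductSpace
open MeasureTheory

/-- Norm bound on the regularized population ridge solution. -/
theorem stmt6 {H : Type*} [NormedAddCommGroup H] [InnerProductSpace ℝ H] [CompleteSpace H]
    {Ω : Type*} [MeasurableSpace Ω] (P : Measure Ω) [IsProbabilityMeasure P]
    (φ : Ω → H) (Y : Ω → ℝ) (κ C : ℝ)
    (hφm : AEStronglyMeasurable φ P) (hYm : AEStronglyMeasurable Y P)
    (hφ : ∀ᵐ ω ∂P, ‖φ ω‖ ≤ κ) (hY : ∀ᵐ ω ∂P, |Y ω| ≤ C)
    (T : H →L[ℝ] H) (hT : ∀ h : H, T h = ∫ ω, ⟪φ ω, h⟫ • φ ω ∂P)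
    (h₀ : H) (hh₀ : (∫ ω, Y ω • φ ω ∂P) = T h₀)
    (ξ : ℝ) (hξ : 0 < ξ) (hreg : H)
    (hmin : ∀ h : H,
      (∫ ω, (Y ω - ⟪hreg, φ ω⟫) ^ 2 ∂P) + ξ * ‖hreg‖ ^ 2
        ≤ (∫ ω, (Y ω - ⟪h, φ ω⟫) ^ 2 ∂P) + ξ * ‖h‖ ^ 2) :
    ‖hreg‖ ≤ κ * ‖h₀‖ / Real.sqrt ξ := by
  obtain ⟨ω₀, hω₀⟩ := hφ.exists
  have hκ0 : 0 ≤ κ := le_trans (norm_nonneg _) hω₀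
  obtain ⟨ω₁, hω₁⟩ := hY.exists
  have hC0 : 0 ≤ C := le_trans (abs_nonneg _) hω₁
  set w := hreg with hw
  set f : Ω → ℝ := fun ω => ⟪w, φ ω⟫ with hf
  set g : Ω → ℝ := fun ω => ⟪h₀, φ ω⟫ with hg
  have hfm : AEStronglyMeasurable f P := aestronglyMeasurable_const.inner hφm
  have hgm : AEStronglyMeasurable g P := aestronglyMeasurable_const.inner hφm
  -- a.e. bounds
  have hbd : ∀ h : H, ∀ᵐ ω ∂P, |⟪h, φ ω⟫| ≤ ‖h‖ * κ := fun h =>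
    hφ.mono fun ω hω => (abs_real_inner_le_norm _ _).trans
      (mul_le_mul_of_nonneg_left hω (norm_nonneg h))
  have hfb : ∀ᵐ ω ∂P, |f ω| ≤ ‖w‖ * κ := hbd w
  have hgb : ∀ᵐ ω ∂P, |g ω| ≤ ‖h₀‖ * κ := hbd h₀
  -- integrability helper
  have Ibd : ∀ (u : Ω → ℝ), AEStronglyMeasurable u P → ∀ (c : ℝ),
      (∀ᵐ ω ∂P, |u ω| ≤ c) → Integrable u P := fun u hu c hc =>
    (integrable_const c).mono' hu (hc.mono fun ω h => by simpa using h)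
  have IfY : Integrable (fun ω => f ω * Y ω) P :=
    Ibd _ (hfm.mul hYm) ((‖w‖ * κ) * C) <| by
      filter_upwards [hfb, hY] with ω h1 h2
      rw [abs_mul]
      exact mul_le_mul h1 h2 (abs_nonneg _) (by positivity)
  have If2 : Integrable (fun ω => f ω ^ 2) P :=
    Ibd _ (hfm.pow 2) ((‖w‖ * κ) ^ 2) <| by
      filter_upwards [hfb] with ω h1
      rw [abs_pow]
      exact pow_le_pow_left₀ (abs_nonneg _) h1 2
  have Ig2 : Integrable (fun ω => g ω ^ 2) P :=
    Ibd _ (hgm.pow 2) ((‖h₀‖ * κ) ^ 2) <| by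
      filter_upwards [hgb] with ω h1
      rw [abs_pow]
      exact pow_le_pow_left₀ (abs_nonneg _) h1 2
  have Igf : Integrable (fun ω => g ω * f ω) P :=
    Ibd _ (hgm.mul hfm) ((‖h₀‖ * κ) * (‖w‖ * κ)) <| by
      filter_upwards [hgb, hfb] with ω h1 h2
      rw [abs_mul]
      exact mul_le_mul h1 h2 (abs_nonneg _) (by positivity)
  have IYf2 : Integrable (fun ω => (Y ω - f ω) ^ 2) P :=
    Ibd _ ((hYm.sub hfm).pow 2) ((C + ‖w‖ * κ) ^ 2) <| by
      filter_upwards [hfb, hY] with ω h1 h2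
      rw [abs_pow]
      refine pow_le_pow_left₀ (abs_nonneg _) ?_ 2
      calc |Y ω - f ω| ≤ |Y ω| + |f ω| := abs_sub _ _
        _ ≤ C + ‖w‖ * κ := add_le_add h2 h1
  set A : ℝ := ∫ ω, f ω * Y ω ∂P with hA
  set B : ℝ := ∫ ω, f ω ^ 2 ∂P with hB
  set N : ℝ := ξ * ‖w‖ ^ 2 with hN
  have hB0 : 0 ≤ B := integral_nonneg fun ω => sq_nonneg _
  have hN0 : 0 ≤ N := by positivity
  -- key variational inequality
  have key : ∀ t : ℝ, 0 ≤ -2 * t * (A - B - N) + t ^ 2 * (B + N) := by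
    intro t
    have h1 := hmin ((1 + t) • w)
    have hinner : ∀ ω, ⟪(1 + t) • w, φ ω⟫ = (1 + t) * f ω := fun ω =>
      real_inner_smul_left _ _ _
    have hexp : (∫ ω, (Y ω - ⟪(1 + t) • w, φ ω⟫) ^ 2 ∂P)
        = (∫ ω, (Y ω - f ω) ^ 2 ∂P) + ((-2 * t) * A + (2 * t + t ^ 2) * B) := by
      simp only [hinner]
      have : (fun ω => (Y ω - (1 + t) * f ω) ^ 2)
          = fun ω => (Y ω - f ω) ^ 2 + ((-2 * t) * (f ω * Y ω) + (2 * t + t ^ 2) * f ω ^ 2) := by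
        funext ω; ring
      have h2 : Integrable (fun ω => (-2 * t) * (f ω * Y ω) + (2 * t + t ^ 2) * f ω ^ 2) P :=
        (IfY.const_mul (-2 * t)).add (If2.const_mul (2 * t + t ^ 2))
      have h3 : Integrable (fun ω => (-2 * t) * (f ω * Y ω)) P := IfY.const_mul (-2 * t)
      have h4 : Integrable (fun ω => (2 * t + t ^ 2) * f ω ^ 2) P := If2.const_mul (2 * t + t ^ 2)
      rw [this, integral_add IYf2 h2, integral_add h3 h4, integral_const_mul, integral_const_mul]
    have hnrm : ‖(1 + t) • w‖ ^ 2 = (1 + t) ^ 2 * ‖w‖ ^ 2 := by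
      rw [norm_smul, mul_pow, Real.norm_eq_abs, sq_abs]
    rw [hexp, hnrm] at h1
    nlinarith [h1]
  -- stationarity inequality : A - B - N ≥ 0
  have hstat : 0 ≤ A - B - N := by
    by_contra hcon
    push_neg at hcon
    set α : ℝ := A - B - N with hα
    set Q : ℝ := B + N with hQ
    have hQ0 : 0 ≤ Q := add_nonneg hB0 hN0
    have hQ1 : (0:ℝ) < Q + 1 := by linarith
    set t : ℝ := α / (Q + 1) with ht
    have htneg : t < 0 := div_neg_of_neg_of_pos hcon hQ1
    have htQ1 : t * (Q + 1) = α := div_mul_cancel₀ _ (ne_of_gt hQ1)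
    have hk := key t
    nlinarith [hk, mul_pos (neg_pos.mpr htneg) (neg_pos.mpr hcon)]
  -- identify A with ∫ g f
  have hAeq : A = ∫ ω, g ω * f ω ∂P := by
    have hYφ : Integrable (fun ω => Y ω • φ ω) P := by
      refine (integrable_const (C * κ)).mono' (hYm.smul hφm) ?_
      filter_upwards [hφ, hY] with ω h1 h2
      simp only [norm_smul, Real.norm_eq_abs]
      exact (mul_le_mul h2 h1 (norm_nonneg _) hC0).trans (by simp)
    have hgφ : Integrable (fun ω => ⟪φ ω, h₀⟫ • φ ω) P := by
      refine (integrable_const ((‖h₀‖ * κ) * κ)).mono' ((hφm.inner aestronglyMeasurable_const).smul hφm) ?_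
      filter_upwards [hφ, hgb] with ω h1 h2
      simp only [norm_smul, Real.norm_eq_abs]
      refine (mul_le_mul ?_ h1 (norm_nonneg _) (by positivity)).trans le_rfl
      rw [real_inner_comm]; exact h2
    have e1 : A = ⟪w, ∫ ω, Y ω • φ ω ∂P⟫ := by
      rw [hA, ← integral_inner hYφ]
      refine integral_congr_ae (Filter.Eventually.of_forall fun ω => ?_)
      simp only [real_inner_smul_right]; ring
    rw [e1, hh₀, hT, ← integral_inner hgφ]
    refine integral_congr_ae (Filter.Eventually.of_forall fun ω => ?_)
    simp only [real_inner_smul_right]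
    rw [show (inner ℝ (φ ω) h₀ : ℝ) = g ω from real_inner_comm _ _]
  -- Cauchy-Schwarz-type bound: ∫ g f - B ≤ (∫ g²)/4
  have hCS : A - B ≤ (∫ ω, g ω ^ 2 ∂P) / 4 := by
    rw [hAeq, ← integral_sub Igf If2, ← integral_div]
    refine integral_mono (Igf.sub If2) (Ig2.div_const 4) fun ω => ?_
    nlinarith [sq_nonneg (2 * f ω - g ω)]
  have hg2 : (∫ ω, g ω ^ 2 ∂P) ≤ (κ * ‖h₀‖) ^ 2 := by
    have : (∫ ω, g ω ^ 2 ∂P) ≤ ∫ _ω, (κ * ‖h₀‖) ^ 2 ∂P := by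
      refine integral_mono_ae Ig2 (integrable_const _) ?_
      filter_upwards [hgb] with ω h1
      calc g ω ^ 2 ≤ |g ω| ^ 2 := by rw [sq_abs]
        _ ≤ (‖h₀‖ * κ) ^ 2 := pow_le_pow_left₀ (abs_nonneg _) h1 2
        _ = (κ * ‖h₀‖) ^ 2 := by ring
    simpa using this
  -- wrap up: ξ ‖w‖² ≤ (κ ‖h₀‖)²/4 ≤ (κ‖h₀‖)²
  have hfinal : ξ * ‖w‖ ^ 2 ≤ (κ * ‖h₀‖) ^ 2 := by nlinarith
  have hnw : ‖w‖ ^ 2 ≤ (κ * ‖h₀‖) ^ 2 / ξ := by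
    rw [le_div_iff₀ hξ]; nlinarith
  calc ‖w‖ = Real.sqrt (‖w‖ ^ 2) := (Real.sqrt_sq (norm_nonneg _)).symm
    _ ≤ Real.sqrt ((κ * ‖h₀‖) ^ 2 / ξ) := Real.sqrt_le_sqrt hnw
    _ = κ * ‖h₀‖ / Real.sqrt ξ := by
        rw [Real.sqrt_div (by positivity), Real.sqrt_sq (by positivity)]
end
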